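/- Let (Y, X) be a random pair with Y non-negative, 0 < E[Y] < ∞ and continuous CDF F_Y, and let mu-hat be a regression function such that mu-hat(X) is non-negative with finite mean, continuous CDF F_{mu-hat(X)}, and mu-hat is auto-calibrated for Y, i.e. E[Y | mu-hat(X)] = mu-hat(X) almost surely. Assume furthermore that E[Y · F_Y(Y)] ≠ E[Y]/2. Then the Gini index admits the closed-form representation G_{Y, mu-hat(X)} = ( 2 E[ mu-hat(X) · F_{mu-hat(X)}(mu-hat(X)) ] − E[ mu-hat(X) ] ) / ( 2 E[ Y · F_Y(Y) ] − E[ Y ] ). -/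

import Mathlib

open MeasureTheory ProbabilityTheory

/-- The cumulative distribution function of a measure on `ℝ`. -/
noncomputable def cdfOf (μ : Measure ℝ) (y : ℝ) : ℝ := (μ (Set.Iic y)).toReal

/-- The left-continuous generalized inverse of a CDF: `F⁻¹(p) = inf {t | p ≤ F t}`. -/
noncomputable def leftContInv (F : ℝ → ℝ) (p : ℝ) : ℝ := sInf {t : ℝ | p ≤ F t}

open Filter Set Topology
open scoped ENNReal

section aux
variable (μ : Measure ℝ) [IsProbabilityMeasure μ]

lemma cdfOf_eq_cdf : cdfOf μ = cdf μ := by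
  ext x; rw [cdfOf, cdf_eq_real, measureReal_def]

omit [IsProbabilityMeasure μ] in
lemma cdfOf_nonneg (x : ℝ) : 0 ≤ cdfOf μ x := ENNReal.toReal_nonneg

lemma cdfOf_le_one (x : ℝ) : cdfOf μ x ≤ 1 := by
  rw [cdfOf_eq_cdf]; exact cdf_le_one μ x

lemma cdfOf_mono : Monotone (cdfOf μ) := by
  rw [cdfOf_eq_cdf]; exact monotone_cdf μ

/-- If `0 < p < F w`, then `F⁻¹(p) < w`. -/
lemma leftContInv_lt_of_lt (hF : Continuous (cdfOf μ)) {p w : ℝ} (hp : 0 < p)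
    (h : p < cdfOf μ w) : leftContInv (cdfOf μ) p < w := by
  obtain ⟨t0, ht0⟩ : ∃ t0, cdfOf μ t0 < p := by
    have h1 : Tendsto (cdfOf μ) atBot (𝓝 0) := cdfOf_eq_cdf μ ▸ tendsto_cdf_atBot μ
    exact (h1.eventually (eventually_lt_nhds hp)).exists
  have hbdd : BddBelow {t : ℝ | p ≤ cdfOf μ t} := by
    refine ⟨t0, fun t ht => ?_⟩
    by_contra hlt
    exact absurd (le_trans ht (cdfOf_mono μ (le_of_not_ge hlt))) (not_le.mpr ht0)
  have hev : ∀ᶠ t in 𝓝 w, p < cdfOf μ t :=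
    (hF.continuousAt).eventually (eventually_gt_nhds h)
  obtain ⟨t, htp, htw⟩ := ((hev.filter_mono nhdsWithin_le_nhds).and
    (eventually_mem_nhdsWithin (s := Iio w))).exists
  exact lt_of_le_of_lt (csInf_le hbdd (le_of_lt htp)) htw

/-- If `p < 1` and `F⁻¹(p) < w`, then `p ≤ F w`. -/
lemma le_of_leftContInv_lt {p : ℝ} (hp : p < 1) {w : ℝ} (h : leftContInv (cdfOf μ) p < w) :
    p ≤ cdfOf μ w := by
  have hne : {t : ℝ | p ≤ cdfOf μ t}.Nonempty := by
    have h1 : Tendsto (cdfOf μ) atTop (𝓝 1) := cdfOf_eq_cdf μ ▸ tendsto_cdf_atTop μ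
    exact (h1.eventually (eventually_gt_nhds hp)).exists.imp fun t ht => le_of_lt ht
  by_cases hbdd : BddBelow {t : ℝ | p ≤ cdfOf μ t}
  · obtain ⟨t, ht, htw⟩ := (csInf_lt_iff hbdd hne).mp h
    exact le_trans ht (cdfOf_mono μ (le_of_lt htw))
  · obtain ⟨t, ht, htw⟩ : ∃ t, p ≤ cdfOf μ t ∧ t ≤ w := by
      rcases not_bddBelow_iff.mp hbdd w with ⟨t, ht, htw⟩
      exact ⟨t, ht, le_of_lt htw⟩
    exact le_trans ht (cdfOf_mono μ htw)

/-- Volume of the `α`-slice. -/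
lemma slice_volume {w c : ℝ} (hw : 0 ≤ w) (hc : c ≤ 1) (_hc0 : 0 ≤ c) :
    ∫⁻ α in Set.Ioo (0:ℝ) 1,
      {α : ℝ | 1 - α < c}.indicator (fun _ => ENNReal.ofReal w) α
      = ENNReal.ofReal (w * c) := by
  have hset : {α : ℝ | 1 - α < c} = Set.Ioi (1 - c) := by
    ext α; simp only [Set.mem_setOf_eq, Set.mem_Ioi]; constructor <;> intro h <;> linarith
  rw [hset, lintegral_indicator measurableSet_Ioi, setLIntegral_const,
    Measure.restrict_apply measurableSet_Ioi]
  have h1 : Set.Ioi (1 - c) ∩ Set.Ioo 0 1 = Set.Ioo (1 - c) 1 := by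
    ext α
    simp only [Set.mem_inter_iff, Set.mem_Ioi, Set.mem_Ioo]
    constructor
    · rintro ⟨ha, _, hb⟩; exact ⟨ha, hb⟩
    · rintro ⟨ha, hb⟩; exact ⟨ha, by linarith, hb⟩
  rw [h1, Real.volume_Ioo, sub_sub_cancel, ← ENNReal.ofReal_mul hw]
end aux

section key
variable {Ω : Type*} [MeasureSpace Ω] [IsProbabilityMeasure (ℙ : Measure Ω)]

lemma key_fubini (W : Ω → ℝ) (hW : Measurable W) (hnn : ∀ ω, 0 ≤ W ω)
    (hint : Integrable W ℙ) (hF : Continuous (cdfOf (Measure.map W ℙ))) :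
    (∫ α in Set.Ioo (0:ℝ) 1,
        ∫ ω in {ω | leftContInv (cdfOf (Measure.map W ℙ)) (1 - α) < W ω}, W ω ∂ℙ)
      = ∫ ω, W ω * cdfOf (Measure.map W ℙ) (W ω) ∂ℙ := by
  have hprob : IsProbabilityMeasure (Measure.map W ℙ) :=
    Measure.isProbabilityMeasure_map hW.aemeasurable
  set μ := Measure.map W ℙ with hμdef
  set F := cdfOf μ with hFdef
  have hFmeas : Measurable F := hF.measurable
  have hFW : Measurable fun ω => F (W ω) := hFmeas.comp hW
  have hWlt : ∫⁻ ω, ENNReal.ofReal (W ω) ∂(ℙ : Measure Ω) < ⊤ := hint.lintegral_lt_top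
  set ν := (volume.restrict (Set.Ioo (0:ℝ) 1)).prod (ℙ : Measure Ω) with hνdef
  set V : Set (ℝ × Ω) := {p | 1 - p.1 < F (W p.2)} with hVdef
  have hVmeas : MeasurableSet V :=
    measurableSet_lt (measurable_const.sub measurable_fst) (hFW.comp measurable_snd)
  set g' : ℝ × Ω → ℝ≥0∞ := V.indicator (fun p => ENNReal.ofReal (W p.2)) with hg'def
  have hg'meas : Measurable g' :=
    (ENNReal.measurable_ofReal.comp (hW.comp measurable_snd)).indicator hVmeas
  set U : Set (ℝ × Ω) := {p | leftContInv F (1 - p.1) < W p.2} with hUdef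
  set g : ℝ × Ω → ℝ≥0∞ := U.indicator (fun p => ENNReal.ofReal (W p.2)) with hgdef
  set N : Set (ℝ × Ω) := {p | 1 - p.1 = F (W p.2)} with hNdef
  have hNmeas : MeasurableSet N :=
    measurableSet_eq_fun (measurable_const.sub measurable_fst) (hFW.comp measurable_snd)
  have hNnull : ν N = 0 := by
    rw [hνdef, Measure.prod_apply_symm hNmeas]
    have hz : ∀ ω : Ω, (volume.restrict (Set.Ioo (0:ℝ) 1)) ((fun α => (α, ω)) ⁻¹' N) = 0 := by
      intro ω
      refine measure_mono_null (t := {1 - F (W ω)}) ?_ ?_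
      · intro α hα
        simp only [Set.mem_preimage, hNdef, Set.mem_setOf_eq] at hα
        simp only [Set.mem_singleton_iff]; linarith
      · exact le_antisymm ((Measure.restrict_apply_le _ _).trans_eq (Real.volume_singleton))
          zero_le
    simp only [hz, lintegral_zero]
  have hprodnull : ν (((Set.Ioo (0:ℝ) 1)ᶜ) ×ˢ (Set.univ : Set Ω)) = 0 := by
    rw [hνdef, Measure.prod_prod, Measure.restrict_apply (measurableSet_Ioo.compl)]
    simp
  have hgg' : g =ᵐ[ν] g' := by
    rw [Filter.eventuallyEq_iff_exists_mem]
    refine ⟨(N ∪ ((Set.Ioo (0:ℝ) 1)ᶜ ×ˢ (Set.univ : Set Ω)))ᶜ, ?_, ?_⟩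
    · rw [mem_ae_iff, compl_compl]
      exact measure_union_null hNnull hprodnull
    · intro p hp
      simp only [Set.mem_compl_iff, Set.mem_union, not_or] at hp
      obtain ⟨hpN, hpI⟩ := hp
      have hp1 : p.1 ∈ Set.Ioo (0:ℝ) 1 := by
        by_contra h
        exact hpI (Set.mem_prod.mpr ⟨h, Set.mem_univ _⟩)
      have hiff : p ∈ U ↔ p ∈ V := by
        constructor
        · intro h
          have hle := le_of_leftContInv_lt μ (by linarith [hp1.1] : (1:ℝ) - p.1 < 1) h
          rcases lt_or_eq_of_le hle with h' | h'
          · exact h'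
          · exact absurd h' hpN
        · intro h
          exact leftContInv_lt_of_lt μ hF (by linarith [hp1.2]) h
      by_cases hU' : p ∈ U
      · rw [hgdef, hg'def, Set.indicator_of_mem hU', Set.indicator_of_mem (hiff.1 hU')]
      · rw [hgdef, hg'def, Set.indicator_of_notMem hU',
          Set.indicator_of_notMem (fun h => hU' (hiff.2 h))]
  -- step A
  have stepA : ∀ α : ℝ, (∫ ω in {ω | leftContInv F (1 - α) < W ω}, W ω ∂ℙ)
      = (∫⁻ ω, g (α, ω) ∂ℙ).toReal := by
    intro α
    have hSmeas : MeasurableSet {ω | leftContInv F (1 - α) < W ω} := hW measurableSet_Ioi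
    rw [integral_eq_lintegral_of_nonneg_ae (Filter.Eventually.of_forall fun ω => hnn ω)
      hW.aestronglyMeasurable.restrict]
    congr 1
    have heq : (fun ω => g (α, ω))
        = {ω | leftContInv F (1 - α) < W ω}.indicator fun ω => ENNReal.ofReal (W ω) := by
      funext ω
      simp only [hgdef, Set.indicator_apply, hUdef, Set.mem_setOf_eq]
    rw [← lintegral_indicator hSmeas, ← heq]
  simp only [stepA]
  -- a.e. equality of the two inner lintegrals
  have haesec : ∀ᵐ α ∂(volume.restrict (Set.Ioo (0:ℝ) 1)),
      (∫⁻ ω, g (α, ω) ∂ℙ) = ∫⁻ ω, g' (α, ω) ∂ℙ := by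
    filter_upwards [Measure.ae_ae_of_ae_prod hgg'] with α hα
    exact lintegral_congr_ae hα
  have hH'meas : Measurable fun α => ∫⁻ ω, g' (α, ω) ∂ℙ :=
    hg'meas.lintegral_prod_right'
  have hH'fin : ∀ α, (∫⁻ ω, g' (α, ω) ∂ℙ) < ⊤ := by
    intro α
    refine lt_of_le_of_lt (lintegral_mono fun ω => ?_) hWlt
    exact Set.indicator_le_self V _ (α, ω)
  calc ∫ α in Set.Ioo (0:ℝ) 1, (∫⁻ ω, g (α, ω) ∂ℙ).toReal
      = ∫ α in Set.Ioo (0:ℝ) 1, (∫⁻ ω, g' (α, ω) ∂ℙ).toReal :=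
        integral_congr_ae (haesec.mono fun α h => by dsimp only; rw [h])
    _ = (∫⁻ α in Set.Ioo (0:ℝ) 1, ∫⁻ ω, g' (α, ω) ∂ℙ).toReal :=
        integral_toReal hH'meas.aemeasurable (ae_of_all _ hH'fin)
    _ = (∫⁻ ω, ∫⁻ α in Set.Ioo (0:ℝ) 1, g' (α, ω) ∂(volume) ∂ℙ).toReal := by
        congr 1
        exact lintegral_lintegral_swap hg'meas.aemeasurable
    _ = (∫⁻ ω, ENNReal.ofReal (W ω * F (W ω)) ∂ℙ).toReal := by
        congr 1
        refine lintegral_congr fun ω => ?_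
        have heq2 : (fun α => g' (α, ω))
            = {α : ℝ | 1 - α < F (W ω)}.indicator fun _ => ENNReal.ofReal (W ω) := by
          funext α
          simp only [hg'def, Set.indicator_apply, hVdef, Set.mem_setOf_eq]
        rw [heq2]
        exact slice_volume (hnn ω) (cdfOf_le_one μ (W ω)) (cdfOf_nonneg μ (W ω))
    _ = ∫ ω, W ω * F (W ω) ∂ℙ :=
        (integral_eq_lintegral_of_nonneg_ae
          (Filter.Eventually.of_forall fun ω => mul_nonneg (hnn ω) (cdfOf_nonneg μ (W ω)))
          (hW.mul hFW).aestronglyMeasurable).symm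
end key


/-- **Closed-form representation of the Gini index under auto-calibration.**
Let `(Y, X)` be a random pair with `Y` non-negative, `0 < E[Y] < ∞` with continuous CDF
`F_Y`, and let `μ̂` be a regression function with `μ̂(X)` non-negative, integrable, with
continuous CDF `F_{μ̂(X)}`, auto-calibrated for `Y`. Assume `E[Y · F_Y(Y)] ≠ E[Y]/2`.
Then the Gini index
`G = (∫_0^1 CAP_{Y,μ̂(X)}(α) dα − 1/2) / (∫_0^1 CAP_{Y,Y}(α) dα − 1/2)` satisfies
`G = (2 E[μ̂(X) F_{μ̂(X)}(μ̂(X))] − E[μ̂(X)]) / (2 E[Y F_Y(Y)] − E[Y])`. -/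
theorem gini_closed_form
    {Ω E : Type*} [MeasureSpace Ω] [IsProbabilityMeasure (ℙ : Measure Ω)]
    [MeasurableSpace E]
    (Y : Ω → ℝ) (X : Ω → E) (μhat : E → ℝ)
    (hYmeas : Measurable Y) (hX : Measurable X) (hμ : Measurable μhat)
    (hYnn : ∀ ω, 0 ≤ Y ω) (hYint : Integrable Y ℙ) (hEY : 0 < ∫ ω, Y ω ∂ℙ)
    (hFYcont : Continuous (cdfOf (Measure.map Y ℙ)))
    (hZnn : ∀ ω, 0 ≤ μhat (X ω))
    (hZint : Integrable (fun ω => μhat (X ω)) ℙ)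
    (hFZcont : Continuous (cdfOf (Measure.map (fun ω => μhat (X ω)) ℙ)))
    (hac : ℙ[Y | MeasurableSpace.comap (fun ω => μhat (X ω)) Real.measurableSpace]
            =ᵐ[ℙ] fun ω => μhat (X ω))
    (hdenom : ∫ ω, Y ω * cdfOf (Measure.map Y ℙ) (Y ω) ∂ℙ ≠ (∫ ω, Y ω ∂ℙ) / 2) :
    ((∫ α in Set.Ioo (0 : ℝ) 1,
        (∫ ω in {ω | leftContInv (cdfOf (Measure.map (fun ω => μhat (X ω)) ℙ)) (1 - α)
                      < μhat (X ω)}, Y ω ∂ℙ) / (∫ ω, Y ω ∂ℙ)) - 1 / 2)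
      / ((∫ α in Set.Ioo (0 : ℝ) 1,
            (∫ ω in {ω | leftContInv (cdfOf (Measure.map Y ℙ)) (1 - α) < Y ω}, Y ω ∂ℙ)
              / (∫ ω, Y ω ∂ℙ)) - 1 / 2)
      = (2 * (∫ ω, μhat (X ω) * cdfOf (Measure.map (fun ω => μhat (X ω)) ℙ) (μhat (X ω)) ∂ℙ)
            - ∫ ω, μhat (X ω) ∂ℙ)
        / (2 * (∫ ω, Y ω * cdfOf (Measure.map Y ℙ) (Y ω) ∂ℙ) - ∫ ω, Y ω ∂ℙ) := by
  classical
  set Z : Ω → ℝ := fun ω => μhat (X ω) with hZdef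
  have hZap : ∀ ω, μhat (X ω) = Z ω := fun _ => rfl
  have hZmeas : Measurable Z := hμ.comp hX
  have hmle : MeasurableSpace.comap Z Real.measurableSpace ≤ _ := hZmeas.comap_le
  simp only [hZap] at *
  have hEYZ : ∫ ω, Y ω ∂ℙ = ∫ ω, Z ω ∂ℙ :=
    (integral_condExp hmle).symm.trans (integral_congr_ae hac)
  have hsets : ∀ t : ℝ, (∫ ω in {ω | t < Z ω}, Y ω ∂ℙ) = ∫ ω in {ω | t < Z ω}, Z ω ∂ℙ := by
    intro t
    have hsm : MeasurableSet[MeasurableSpace.comap Z Real.measurableSpace] {ω | t < Z ω} :=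
      ⟨Set.Ioi t, measurableSet_Ioi, rfl⟩
    rw [← setIntegral_condExp hmle hYint hsm]
    exact integral_congr_ae (ae_restrict_of_ae hac)
  have hip : ∀ α : ℝ,
      (∫ ω in {ω | leftContInv (cdfOf (Measure.map Z ℙ)) (1 - α) < Z ω}, Y ω ∂ℙ)
      = ∫ ω in {ω | leftContInv (cdfOf (Measure.map Z ℙ)) (1 - α) < Z ω}, Z ω ∂ℙ :=
    fun α => hsets _
  simp only [hip]
  rw [integral_div, integral_div, key_fubini Z hZmeas hZnn hZint hFZcont,
    key_fubini Y hYmeas hYnn hYint hFYcont, ← hEYZ]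
  set A := ∫ ω, Z ω * cdfOf (Measure.map Z ℙ) (Z ω) ∂ℙ
  set B := ∫ ω, Y ω * cdfOf (Measure.map Y ℙ) (Y ω) ∂ℙ
  set e := ∫ ω, Y ω ∂ℙ
  have he : e ≠ 0 := ne_of_gt hEY
  have hB : 2 * B - e ≠ 0 := by
    intro h; apply hdenom; linarith
  have h2e : (2 : ℝ) * e ≠ 0 := by positivity
  have h1 : A / e - 1 / 2 = (2 * A - e) / (2 * e) := by field_simp
  have h2 : B / e - 1 / 2 = (2 * B - e) / (2 * e) := by field_simp
  rw [h1, h2, div_div_div_eq, mul_comm (2 * A - e) (2 * e), mul_div_mul_left _ _ h2e]
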